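/- Let p be a prime number, let B be a ℚ-algebra equipped with a ring anti-involution x ↦ x* (an additive involutive map satisfying (xy)* = y*·x* and 1* = 1), and let O' ⊆ B be a subring that is finitely generated as a ℤ-module. Assume that for every x ∈ O' there exists a positive integer N prime to p such that N·x* ∈ O'. Then there exists a subring O ⊆ O' stable under the involution (x ∈ O implies x* ∈ O) such that for every x ∈ O' there exists a positive integer N prime to p with N·x ∈ O. -/

import Mathlib

/-- Let `B` be a `ℚ`-algebra with a ring anti-involution `σ`, and let `O'` be a subring of `B`
which is finitely generated as a `ℤ`-module. If for every `x ∈ O'` there is a positive integer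
`N` prime to `p` with `N • σ x ∈ O'`, then there is a subring `O ⊆ O'` stable under `σ` such
that every `x ∈ O'` satisfies `N • x ∈ O` for some positive integer `N` prime to `p`. -/
theorem exists_involution_stable_order {B : Type*} [Ring B] [Algebra ℚ B]
    (p : ℕ) (hp : p.Prime) (σ : B → B)
    (hadd : ∀ x y, σ (x + y) = σ x + σ y)
    (hmul : ∀ x y, σ (x * y) = σ y * σ x)
    (hone : σ 1 = 1)
    (hinvol : ∀ x, σ (σ x) = x)
    (O' : Subring B) (hfg : O'.toAddSubgroup.FG)
    (hstar : ∀ x ∈ O', ∃ N : ℕ, 0 < N ∧ ¬ p ∣ N ∧ (N : B) * σ x ∈ O') :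
    ∃ O : Subring B, O ≤ O' ∧ (∀ x ∈ O, σ x ∈ O) ∧
      ∀ x ∈ O', ∃ N : ℕ, 0 < N ∧ ¬ p ∣ N ∧ (N : B) * x ∈ O := by
  -- basic properties of σ
  have hσ0 : σ 0 = 0 := by
    have h := (hadd 0 0).symm
    rw [add_zero] at h
    exact add_eq_right.mp h
  have hσneg : ∀ x, σ (-x) = - σ x := by
    intro x
    have h := hadd x (-x)
    rw [add_neg_cancel, hσ0] at h
    exact (neg_eq_of_add_eq_zero_right h.symm).symm
  have hσnat : ∀ n : ℕ, σ (n : B) = (n : B) := by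
    intro n
    induction n with
    | zero => simpa using hσ0
    | succ k ih => push_cast; rw [hadd, ih, hone]
  obtain ⟨s, hs⟩ := hfg
  have hsub : ∀ e ∈ s, e ∈ O' := by
    intro e he
    have : e ∈ AddSubgroup.closure (s : Set B) := AddSubgroup.subset_closure he
    rw [hs] at this; exact this
  choose Nf hN1 hN2 hN3 using fun (e : B) (he : e ∈ s) => hstar e (hsub e he)
  set N : ℕ := ∏ e ∈ s.attach, Nf e e.2 with hNdef
  have hNpos : 0 < N := Finset.prod_pos (fun e _ => hN1 e e.2)
  have hNp : ¬ p ∣ N := by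
    intro h
    obtain ⟨e, -, hd⟩ := (Prime.dvd_finset_prod_iff hp.prime _).mp h
    exact hN2 e e.2 hd
  set S : Set B := ((fun e => (N : B) * e) '' s) ∪ ((fun e => (N : B) * σ e) '' s) with hSdef
  -- S ⊆ O'
  have hSO' : S ⊆ (O' : Set B) := by
    rintro x (⟨e, he, rfl⟩ | ⟨e, he, rfl⟩)
    · exact O'.mul_mem (natCast_mem O' N) (hsub e he)
    · show (N : B) * σ e ∈ O'
      have hdvd : Nf e he ∣ N := Finset.dvd_prod_of_mem _ (Finset.mem_attach s ⟨e, he⟩)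
      obtain ⟨M, hM⟩ := hdvd
      rw [hM, Nat.cast_mul, (Nat.cast_commute (Nf e he) (M : B)).eq, mul_assoc]
      exact O'.mul_mem (natCast_mem O' M) (hN3 e he)
  refine ⟨Subring.closure S, Subring.closure_le.mpr hSO', ?_, ?_⟩
  · -- σ-stability
    intro x hx
    induction hx using Subring.closure_induction with
    | mem y hy =>
      apply Subring.subset_closure
      rcases hy with ⟨e, he, rfl⟩ | ⟨e, he, rfl⟩
      · rw [hmul, hσnat, (Nat.cast_commute N (σ e)).symm.eq]
        exact Or.inr ⟨e, he, rfl⟩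
      · rw [hmul, hσnat, hinvol, (Nat.cast_commute N e).symm.eq]
        exact Or.inl ⟨e, he, rfl⟩
    | zero => rw [hσ0]; exact Subring.zero_mem _
    | one => rw [hone]; exact Subring.one_mem _
    | add a b _ _ ha hb => rw [hadd]; exact Subring.add_mem _ ha hb
    | neg a _ ha => rw [hσneg]; exact Subring.neg_mem _ ha
    | mul a b _ _ ha hb => rw [hmul]; exact Subring.mul_mem _ hb ha
  · -- every x ∈ O' has N x ∈ O
    intro x hx
    refine ⟨N, hNpos, hNp, ?_⟩
    have hx' : x ∈ AddSubgroup.closure (s : Set B) := by rw [hs]; exact hx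
    clear hx
    induction hx' using AddSubgroup.closure_induction with
    | mem y hy => exact Subring.subset_closure (Or.inl ⟨y, hy, rfl⟩)
    | zero => rw [mul_zero]; exact Subring.zero_mem _
    | add a b _ _ ha hb => rw [mul_add]; exact Subring.add_mem _ ha hb
    | neg a _ ha => rw [mul_neg]; exact Subring.neg_mem _ ha
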